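/- arXiv:math/9803085 — 2 statements merged into one kernel-verified Lean document; each statement's English description precedes it below -/
import Mathlib

section
/- Let R be a graded F-algebra and d > 0. Every d-dimensional deformation of R is isomorphic, as a deformation of R, to (R̃_ψ, ε, j) for some ψ ∈ Z_d(R). -/
/-- A finite-dimensional graded-commutative ℤ-graded `F`-algebra
("graded F-algebra" in the sense of Seidel's paper). -/
structure GradedFAlg (F : Type) [Field F] where
  carrier : Type
  [ring : Ring carrier]
  [alg : Algebra F carrier]
  grading : ℤ → Submodule F carrier
  [gradedAlgebra : GradedAlgebra grading]
  [findim : FiniteDimensional F carrier]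
  gcomm : ∀ (i j : ℤ) (x y : carrier), x ∈ grading i → y ∈ grading j →
    x * y = ((-1 : F) ^ (i * j)) • (y * x)

attribute [instance] GradedFAlg.ring GradedFAlg.alg GradedFAlg.gradedAlgebra GradedFAlg.findim

variable {F : Type} [Field F]

/-- A homomorphism of graded `F`-algebras. -/
structure GradedFAlg.Hom (A B : GradedFAlg F) where
  toAlgHom : A.carrier →ₐ[F] B.carrier
  graded : ∀ (i : ℤ) (x : A.carrier), x ∈ A.grading i → toAlgHom x ∈ B.grading i

/-- The identity homomorphism of graded `F`-algebras. -/
def GradedFAlg.Hom.id (A : GradedFAlg F) : GradedFAlg.Hom A A :=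
  ⟨AlgHom.id F A.carrier, fun _ _ h => h⟩

/-- A `d`-dimensional (first order infinitesimal) deformation `(R̃, t, j)` of `A`:
`t ∈ R̃^d` with `t² = 0` whose annihilator is exactly `t·R̃`, and `j : R̃ → A`
a surjective homomorphism of graded algebras with kernel `t·R̃`. -/
structure Deformation (F : Type) [Field F] (A : GradedFAlg F) (d : ℤ) where
  alg : GradedFAlg F
  t : alg.carrier
  t_mem : t ∈ alg.grading d
  t_sq : t * t = 0
  t_ann : ∀ x : alg.carrier, t * x = 0 ↔ ∃ y : alg.carrier, x = t * y
  j : GradedFAlg.Hom alg A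
  j_surj : Function.Surjective j.toAlgHom
  j_ker : ∀ x : alg.carrier, j.toAlgHom x = 0 ↔ ∃ y : alg.carrier, x = t * y

/-- A morphism of deformations over a homomorphism `f` of graded `F`-algebras. -/
structure DefMorphismOver {A B : GradedFAlg F} (f : GradedFAlg.Hom A B) {d : ℤ}
    (D1 : Deformation F A d) (D2 : Deformation F B d) where
  toHom : GradedFAlg.Hom D1.alg D2.alg
  map_t : toHom.toAlgHom D1.t = D2.t
  over_f : ∀ x, D2.j.toAlgHom (toHom.toAlgHom x) = f.toAlgHom (D1.j.toAlgHom x)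

/-- Two deformations of `A` are isomorphic if there is a bijective morphism of
deformations (i.e. a morphism over the identity of `A`) between them. -/
def Deformation.Iso {A : GradedFAlg F} {d : ℤ} (D1 D2 : Deformation F A d) : Prop :=
  ∃ φ : DefMorphismOver (GradedFAlg.Hom.id A) D1 D2, Function.Bijective φ.toHom.toAlgHom

/-- `ψ ∈ Z_d(R)`: an `F`-bilinear map `R × R → R` of degree `-d`, graded
symmetric, satisfying the cocycle identity
`(-1)^{d·deg x}·x·ψ(y,z) - ψ(xy,z) + ψ(x,yz) - ψ(x,y)·z = 0`. -/
structure IsCocycle (R : GradedFAlg F) (d : ℤ)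
    (ψ : R.carrier →ₗ[F] R.carrier →ₗ[F] R.carrier) : Prop where
  deg : ∀ (i j : ℤ) (x y : R.carrier), x ∈ R.grading i → y ∈ R.grading j →
    ψ x y ∈ R.grading (i + j - d)
  symm : ∀ (i j : ℤ) (x y : R.carrier), x ∈ R.grading i → y ∈ R.grading j →
    ψ x y = ((-1 : F) ^ (i * j)) • ψ y x
  cocycle : ∀ (i : ℤ) (x y z : R.carrier), x ∈ R.grading i →
    ((-1 : F) ^ (d * i)) • (x * ψ y z) - ψ (x * y) z + ψ x (y * z) - ψ x y * z = 0

/-- The deformation `D` "is" the twisted algebra `R̃_ψ = R ⊕ R·ε`: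
there is an `F`-linear identification `e` of `D.alg` with `R × R` under which
multiplication becomes the twisted product
`(x₀ + x₁ε)(y₀ + y₁ε) = x₀y₀ + ((-1)^{d·deg x₀} x₀y₁ + x₁y₀ + ψ(x₀,y₀))ε`
(the sign operator `σ` being `σ x = (-1)^{d·deg x}·x` on homogeneous elements),
`t` becomes `ε`, `j` becomes the projection to the first factor, and the grading
of `D.alg` is the evident grading of `R ⊕ R·ε` with `deg ε = d`. -/
def IsTwistedModel (R : GradedFAlg F) (d : ℤ) (σ : R.carrier →ₗ[F] R.carrier)
    (ψ : R.carrier →ₗ[F] R.carrier →ₗ[F] R.carrier) (D : Deformation F R d) : Prop :=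
  ∃ e : D.alg.carrier ≃ₗ[F] R.carrier × R.carrier,
    (∀ x y : D.alg.carrier, e (x * y) =
      ((e x).1 * (e y).1, σ (e x).1 * (e y).2 + (e x).2 * (e y).1 + ψ (e x).1 (e y).1)) ∧
    e 1 = (1, 0) ∧
    e D.t = (0, 1) ∧
    (∀ x, D.j.toAlgHom x = (e x).1) ∧
    (∀ (i : ℤ) (x : D.alg.carrier), x ∈ D.alg.grading i ↔
      (e x).1 ∈ R.grading i ∧ (e x).2 ∈ R.grading (i - d))


section AuxDecomp
open DirectSum
set_option maxHeartbeats 1000000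
set_option synthInstance.maxHeartbeats 1000000
/-- A linear map that shifts degrees by `c` commutes with homogeneous decomposition. -/
lemma graded_decompose_comm {F : Type} [Field F] {A B : Type}
    [AddCommGroup A] [Module F A] [AddCommGroup B] [Module F B]
    (𝒜 : ℤ → Submodule F A) (ℬ : ℤ → Submodule F B)
    [DirectSum.Decomposition 𝒜] [DirectSum.Decomposition ℬ]
    (f : A →ₗ[F] B) (c : ℤ) (hf : ∀ i x, x ∈ 𝒜 i → f x ∈ ℬ (i + c)) (r : A) (i : ℤ) :
    (DirectSum.decompose ℬ (f r) (i + c) : B) = f (DirectSum.decompose 𝒜 r i : A) := by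
  induction r using DirectSum.Decomposition.inductionOn (ℳ := 𝒜) with
  | zero => simp
  | @homogeneous k m =>
    by_cases hik : i = k
    · subst hik
      rw [DirectSum.decompose_of_mem_same 𝒜 m.2,
        DirectSum.decompose_of_mem_same ℬ (hf i m m.2)]
    · rw [DirectSum.decompose_of_mem_ne 𝒜 m.2 (Ne.symm hik),
        DirectSum.decompose_of_mem_ne ℬ (hf k m m.2)
          (by omega), map_zero]
  | add x y hx hy =>
    rw [map_add, DirectSum.decompose_add, DirectSum.decompose_add, DirectSum.add_apply,
      DirectSum.add_apply, Submodule.coe_add, Submodule.coe_add, map_add, hx, hy]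

end AuxDecomp

/-- Every `d`-dimensional deformation of a graded `F`-algebra
`R` is isomorphic, as a deformation of `R`, to `(R̃_ψ, ε, j)` for some
`ψ ∈ Z_d(R)`; equivalently, every deformation of `R` is itself a model of some
twisted algebra `R̃_ψ`. -/
theorem every_deformation_is_twisted_model
    {F : Type} [Field F] (R : GradedFAlg F) (d : ℤ) (hd : 0 < d)
    (σ : R.carrier →ₗ[F] R.carrier)
    (hσ : ∀ (i : ℤ) (x : R.carrier), x ∈ R.grading i → σ x = ((-1 : F) ^ (d * i)) • x)
    (D : Deformation F R d) :
    ∃ ψ : R.carrier →ₗ[F] R.carrier →ₗ[F] R.carrier,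
      IsCocycle R d ψ ∧ IsTwistedModel R d σ ψ D := by
  classical
  -- Step 1: a graded linear section `s` of `j` with `s 1 = 1`.
  obtain ⟨s, hssec, hsgrad, hs1⟩ :
      ∃ s : R.carrier →ₗ[F] D.alg.carrier,
        (∀ x, D.j.toAlgHom (s x) = x) ∧
        (∀ (i : ℤ) (x : R.carrier), x ∈ R.grading i → s x ∈ D.alg.grading i) ∧
        s 1 = 1 := by
    have hdecJ : ∀ (r : D.alg.carrier) (i : ℤ),
        (DirectSum.decompose R.grading (D.j.toAlgHom r) i : R.carrier) =
          D.j.toAlgHom ((DirectSum.decompose D.alg.grading r i : D.alg.carrier)) := by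
      intro r i
      have h := graded_decompose_comm D.alg.grading R.grading D.j.toAlgHom.toLinearMap 0
        (fun k x hx => by simpa using D.j.graded k x hx) r i
      rw [add_zero] at h
      simpa using h
    -- a section in each degree
    have hsec : ∀ i : ℤ, ∃ g : ↥(R.grading i) →ₗ[F] ↥(D.alg.grading i),
        ∀ y : ↥(R.grading i), D.j.toAlgHom (g y : D.alg.carrier) = (y : R.carrier) := by
      intro i
      set f : ↥(D.alg.grading i) →ₗ[F] ↥(R.grading i) :=
        LinearMap.codRestrict (R.grading i)
          (D.j.toAlgHom.toLinearMap.comp (D.alg.grading i).subtype)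
          (fun x => D.j.graded i x x.2) with hf
      have hrange : LinearMap.range f = ⊤ := by
        rw [LinearMap.range_eq_top]
        rintro ⟨y, hy⟩
        obtain ⟨r, hr⟩ := D.j_surj y
        refine ⟨⟨(DirectSum.decompose D.alg.grading r i : D.alg.carrier),
          SetLike.coe_mem _⟩, ?_⟩
        apply Subtype.ext
        show D.j.toAlgHom ((DirectSum.decompose D.alg.grading r i : D.alg.carrier)) = y
        rw [← hdecJ, hr, DirectSum.decompose_of_mem_same _ hy]
      obtain ⟨g, hg⟩ := f.exists_rightInverse_of_surjective hrange
      refine ⟨g, fun y => ?_⟩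
      have h := congrArg Subtype.val (LinearMap.ext_iff.mp hg y)
      exact h
    -- assemble a graded section
    let s0 : R.carrier →ₗ[F] D.alg.carrier :=
      (DirectSum.toModule F ℤ D.alg.carrier
          (fun i => (D.alg.grading i).subtype.comp (Classical.choose (hsec i)))).comp
        (DirectSum.decomposeLinearEquiv R.grading).toLinearMap
    have hs0 : ∀ (i : ℤ) (m : ↥(R.grading i)),
        s0 (m : R.carrier) = (Classical.choose (hsec i) m : D.alg.carrier) := by
      intro i m
      simp only [s0, LinearMap.comp_apply, LinearEquiv.coe_coe,
        DirectSum.decomposeLinearEquiv_apply, DirectSum.decompose_coe]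
      rw [← DirectSum.lof_eq_of F, DirectSum.toModule_lof]
      rfl
    have hs0sec : ∀ x, D.j.toAlgHom (s0 x) = x := by
      intro x
      induction x using DirectSum.Decomposition.inductionOn (ℳ := R.grading) with
      | zero => simp
      | @homogeneous i m => rw [hs0]; exact Classical.choose_spec (hsec i) m
      | add a b ha hb => rw [map_add, map_add, ha, hb]
    have hs0grad : ∀ (i : ℤ) (x : R.carrier), x ∈ R.grading i → s0 x ∈ D.alg.grading i := by
      intro i x hx
      have h := hs0 i ⟨x, hx⟩
      rw [show x = ((⟨x, hx⟩ : ↥(R.grading i)) : R.carrier) from rfl, h]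
      exact SetLike.coe_mem _
    -- correct the section so that it sends 1 to 1
    have h1R : (1 : R.carrier) ∈ R.grading 0 := SetLike.one_mem_graded _
    have hu0 : (1 : D.alg.carrier) - s0 1 ∈ D.alg.grading 0 :=
      sub_mem (SetLike.one_mem_graded _) (hs0grad 0 1 h1R)
    have hju : D.j.toAlgHom ((1 : D.alg.carrier) - s0 1) = 0 := by
      simp [map_sub, hs0sec]
    obtain ⟨lam, hlam1, hlamne⟩ : ∃ lam : R.carrier →ₗ[F] F,
        lam 1 • ((1 : D.alg.carrier) - s0 1) = (1 : D.alg.carrier) - s0 1 ∧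
        ∀ (i : ℤ) (x : R.carrier), x ∈ R.grading i → i ≠ 0 → lam x = 0 := by
      by_cases h1 : (1 : R.carrier) = 0
      · refine ⟨0, ?_, fun _ _ _ _ => rfl⟩
        -- the deformation is trivial in this case
        obtain ⟨y, hy⟩ := (D.j_ker 1).mp (by rw [map_one, h1])
        have ht0 : D.t = 0 := by
          have h := congrArg (fun r => D.t * r) hy
          simpa [← mul_assoc, D.t_sq] using h
        have hz : ∀ z : D.alg.carrier, z = 0 := by
          intro z
          obtain ⟨w, hw⟩ := (D.t_ann z).mp (by rw [ht0, zero_mul])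
          rw [hw, ht0, zero_mul]
        rw [hz ((1 : D.alg.carrier) - s0 1), smul_zero]
      · have hv : (⟨1, h1R⟩ : ↥(R.grading 0)) ≠ 0 := by
          intro h
          exact h1 (congrArg Subtype.val h)
        obtain ⟨g0, hg0⟩ :=
          (LinearMap.toSpanSingleton F (↥(R.grading 0))
            ⟨1, h1R⟩).exists_leftInverse_of_injective
            (LinearMap.ker_toSpanSingleton F hv)
        let pr0 : R.carrier →ₗ[F] ↥(R.grading 0) :=
          (DirectSum.component F ℤ (fun i => ↥(R.grading i)) 0).comp
            (DirectSum.decomposeLinearEquiv R.grading).toLinearMap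
        have hpr : ∀ x : R.carrier, (pr0 x : R.carrier)
            = (DirectSum.decompose R.grading x 0 : R.carrier) := fun x => rfl
        refine ⟨g0.comp pr0, ?_, ?_⟩
        · have hpr1 : pr0 1 = ⟨1, h1R⟩ := by
            apply Subtype.ext
            rw [hpr, DirectSum.decompose_of_mem_same _ h1R]
          have hg0v : g0 (⟨1, h1R⟩ : ↥(R.grading 0)) = 1 := by
            have h := congrArg (fun q => q (1 : F)) hg0
            simpa [LinearMap.toSpanSingleton_apply] using h
          rw [LinearMap.comp_apply, hpr1, hg0v, one_smul]
        · intro i x hx hi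
          have hx0 : pr0 x = 0 := by
            apply Subtype.ext
            rw [hpr, DirectSum.decompose_of_mem_ne _ hx hi]
            rfl
          rw [LinearMap.comp_apply, hx0, map_zero]
    refine ⟨s0 + lam.smulRight ((1 : D.alg.carrier) - s0 1), ?_, ?_, ?_⟩
    · intro x
      simp [LinearMap.smulRight_apply, hs0sec, hju]
    · intro i x hx
      by_cases hi : i = 0
      · subst hi
        exact add_mem (hs0grad 0 x hx) (Submodule.smul_mem _ _ hu0)
      · have h := hlamne i x hx hi
        simp only [LinearMap.add_apply, LinearMap.smulRight_apply, h, zero_smul, add_zero]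
        exact hs0grad i x hx
    · show s0 1 + lam 1 • ((1 : D.alg.carrier) - s0 1) = 1
      rw [hlam1]
      abel
  have hjt : D.j.toAlgHom D.t = 0 := (D.j_ker D.t).mpr ⟨1, (mul_one _).symm⟩
  have tmul0 : ∀ a : D.alg.carrier, D.t * (a * D.t) = 0 := by
    intro a
    induction a using DirectSum.Decomposition.inductionOn (ℳ := D.alg.grading) with
    | zero => simp
    | @homogeneous m a =>
      rw [D.alg.gcomm m d (a : D.alg.carrier) D.t a.2 D.t_mem, mul_smul_comm,
        ← mul_assoc, D.t_sq, zero_mul, smul_zero]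
    | add a b ha hb => rw [add_mul, mul_add, ha, hb, add_zero]
  have tmulmul0 : ∀ a b : D.alg.carrier, (D.t * a) * (D.t * b) = 0 := by
    intro a b
    rw [← mul_assoc, mul_assoc D.t a D.t, tmul0, zero_mul]
  -- Step 2: the linear identification.
  let μ : R.carrier × R.carrier →ₗ[F] D.alg.carrier :=
    s.comp (LinearMap.fst F _ _) +
      ((LinearMap.mulLeft F D.t).comp s).comp (LinearMap.snd F _ _)
  have hμ : ∀ p : R.carrier × R.carrier, μ p = s p.1 + D.t * s p.2 := fun p => rfl
  have hμbij : Function.Bijective μ := by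
    constructor
    · refine (injective_iff_map_eq_zero μ).mpr ?_
      intro p hp
      rw [hμ] at hp
      have h1 : p.1 = 0 := by
        have h := congrArg D.j.toAlgHom hp
        simpa [map_add, map_mul, hssec, hjt] using h
      have h2 : D.t * s p.2 = 0 := by
        rw [h1, map_zero, zero_add] at hp; exact hp
      obtain ⟨y, hy⟩ := (D.t_ann (s p.2)).mp h2
      have h3 : p.2 = 0 := by
        have h := congrArg D.j.toAlgHom hy
        simpa [map_mul, hssec, hjt] using h
      exact Prod.ext_iff.mpr ⟨h1, h3⟩
    · intro z
      obtain ⟨y, hy⟩ := (D.j_ker (z - s (D.j.toAlgHom z))).mp (by simp [map_sub, hssec])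
      obtain ⟨w, hw⟩ := (D.j_ker (y - s (D.j.toAlgHom y))).mp (by simp [map_sub, hssec])
      refine ⟨(D.j.toAlgHom z, D.j.toAlgHom y), ?_⟩
      rw [hμ]
      have h0 : D.t * (y - s (D.j.toAlgHom y)) = 0 := by
        rw [hw, ← mul_assoc, D.t_sq, zero_mul]
      rw [mul_sub, sub_eq_zero] at h0
      rw [← h0, ← hy]
      abel
  let e : D.alg.carrier ≃ₗ[F] R.carrier × R.carrier := (LinearEquiv.ofBijective μ hμbij).symm
  have he' : ∀ a b : R.carrier, e (s a + D.t * s b) = (a, b) := by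
    intro a b
    have h := (LinearEquiv.ofBijective μ hμbij).symm_apply_apply (a, b)
    rw [LinearEquiv.ofBijective_apply, hμ] at h
    exact h
  have he : ∀ z : D.alg.carrier, z = s (e z).1 + D.t * s (e z).2 := by
    intro z
    have h := (LinearEquiv.ofBijective μ hμbij).apply_symm_apply z
    rw [LinearEquiv.ofBijective_apply, hμ] at h
    exact h.symm
  have hfst : ∀ z, D.j.toAlgHom z = (e z).1 := by
    intro z
    conv_lhs => rw [he z]
    simp [map_add, map_mul, hssec, hjt]
  -- Step 3: the cocycle.
  let ψ : R.carrier →ₗ[F] R.carrier →ₗ[F] R.carrier :=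
    LinearMap.mk₂ F (fun x y => (e (s x * s y)).2)
      (fun x x' y => by rw [map_add, add_mul, map_add]; rfl)
      (fun c x y => by rw [map_smul, smul_mul_assoc, map_smul]; rfl)
      (fun x y y' => by rw [map_add, mul_add, map_add]; rfl)
      (fun c x y => by rw [map_smul, mul_smul_comm, map_smul]; rfl)
  have hψapp : ∀ x y, ψ x y = (e (s x * s y)).2 := fun _ _ => rfl
  have hψ1 : ∀ x y, (e (s x * s y)).1 = x * y := by
    intro x y; rw [← hfst, map_mul, hssec, hssec]
  have hψ : ∀ x y, s x * s y = s (x * y) + D.t * s (ψ x y) := by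
    intro x y
    conv_lhs => rw [he (s x * s y)]
    rw [hψ1, hψapp]
  have hT' : ∀ a b : R.carrier, D.t * (s a * s b) = D.t * s (a * b) := by
    intro a b
    rw [hψ a b, mul_add, ← mul_assoc, D.t_sq, zero_mul, add_zero]
  have hT : ∀ a b : R.carrier, (D.t * s a) * s b = D.t * s (a * b) := by
    intro a b
    rw [mul_assoc, hT']
  have hst : ∀ (i : ℤ) (x : R.carrier), x ∈ R.grading i →
      s x * D.t = ((-1 : F) ^ (i * d)) • (D.t * s x) := fun i x hx =>
    D.alg.gcomm i d (s x) D.t (hsgrad i x hx) D.t_mem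
  have hsxt : ∀ (i : ℤ) (x : R.carrier), x ∈ R.grading i → ∀ r : R.carrier,
      s x * (D.t * s r) = D.t * s (((-1 : F) ^ (d * i)) • (x * r)) := by
    intro i x hx r
    calc s x * (D.t * s r) = (s x * D.t) * s r := (mul_assoc _ _ _).symm
      _ = (((-1 : F) ^ (i * d)) • (D.t * s x)) * s r := by rw [hst i x hx]
      _ = ((-1 : F) ^ (i * d)) • (D.t * (s x * s r)) := by rw [smul_mul_assoc, mul_assoc]
      _ = ((-1 : F) ^ (i * d)) • (D.t * s (x * r)) := by rw [hT']
      _ = D.t * s (((-1 : F) ^ (d * i)) • (x * r)) := by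
          rw [map_smul, mul_smul_comm, mul_comm i d]
  have keyA : ∀ x0 y0 y1 : R.carrier,
      s x0 * (s y0 + D.t * s y1) = s (x0 * y0) + D.t * s (σ x0 * y1 + ψ x0 y0) := by
    intro x0 y0 y1
    induction x0 using DirectSum.Decomposition.inductionOn (ℳ := R.grading) with
    | zero => simp
    | @homogeneous i m =>
      have hcomm : s (m : R.carrier) * (D.t * s y1) = D.t * s (σ (m : R.carrier) * y1) := by
        rw [hsxt i (m : R.carrier) m.2 y1, hσ i (m : R.carrier) m.2, smul_mul_assoc]
      rw [mul_add, hψ, hcomm, map_add, mul_add]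
      abel
    | add a b ha hb =>
      rw [show s (a + b) = s a + s b from map_add s a b, add_mul, ha, hb]
      simp only [map_add, add_mul, LinearMap.add_apply, mul_add]
      abel
  have keyC : ∀ x1 y0 y1 : R.carrier,
      (D.t * s x1) * (s y0 + D.t * s y1) = D.t * s (x1 * y0) := by
    intro x1 y0 y1
    rw [mul_add, hT, tmulmul0, add_zero]
  have key : ∀ x0 x1 y0 y1 : R.carrier,
      (s x0 + D.t * s x1) * (s y0 + D.t * s y1) =
        s (x0 * y0) + D.t * s (σ x0 * y1 + x1 * y0 + ψ x0 y0) := by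
    intro x0 x1 y0 y1
    rw [add_mul, keyA, keyC]
    simp only [map_add, mul_add]
    abel
  -- Step 4: the grading.
  have hLgrad : ∀ (m : ℤ) (w : R.carrier), w ∈ R.grading m →
      D.t * s w ∈ D.alg.grading (m + d) := by
    intro m w hw
    have h := SetLike.mul_mem_graded D.t_mem (hsgrad m w hw)
    rwa [add_comm] at h
  have hdecL : ∀ (w : R.carrier) (m : ℤ),
      (DirectSum.decompose D.alg.grading (D.t * s w) (m + d) : D.alg.carrier)
        = D.t * s (DirectSum.decompose R.grading w m : R.carrier) := by
    intro w m
    have h := graded_decompose_comm R.grading D.alg.grading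
      ((LinearMap.mulLeft F D.t).comp s) d (fun m w hw => hLgrad m w hw) w m
    simpa using h
  have tcancel : ∀ w : R.carrier, D.t * s w = 0 → w = 0 := by
    intro w hw
    obtain ⟨y, hy⟩ := (D.t_ann (s w)).mp hw
    have h := congrArg D.j.toAlgHom hy
    simpa [map_mul, hssec, hjt] using h
  have hgrad : ∀ (i : ℤ) (z : D.alg.carrier),
      z ∈ D.alg.grading i ↔ (e z).1 ∈ R.grading i ∧ (e z).2 ∈ R.grading (i - d) := by
    intro i z
    constructor
    · intro hz
      have h1 : (e z).1 ∈ R.grading i := by rw [← hfst]; exact D.j.graded i z hz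
      refine ⟨h1, ?_⟩
      have h2 : D.t * s (e z).2 = z - s (e z).1 := eq_sub_of_add_eq' (he z).symm
      have hu : D.t * s (e z).2 ∈ D.alg.grading i := by
        rw [h2]; exact sub_mem hz (hsgrad i _ h1)
      have hcomp : ∀ m : ℤ, m ≠ i - d →
          (DirectSum.decompose R.grading ((e z).2) m : R.carrier) = 0 := by
        intro m hm
        refine tcancel _ ?_
        rw [← hdecL]
        exact DirectSum.decompose_of_mem_ne _ hu (by omega)
      have hsum := DirectSum.sum_support_decompose R.grading ((e z).2)
      rw [← hsum]
      apply Submodule.sum_mem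
      intro m _
      by_cases hm : m = i - d
      · subst hm; exact SetLike.coe_mem _
      · rw [hcomp m hm]; exact zero_mem _
    · rintro ⟨h1, h2⟩
      have h3 : D.t * s (e z).2 ∈ D.alg.grading i := by
        have h := SetLike.mul_mem_graded D.t_mem (hsgrad _ _ h2)
        rwa [show d + (i - d) = i by ring] at h
      have h4 := add_mem (hsgrad i _ h1) h3
      rwa [← he z] at h4
  -- Conclusion.
  refine ⟨ψ, ⟨?_, ?_, ?_⟩, ⟨e, ?_, ?_, ?_, hfst, hgrad⟩⟩
  · -- degree
    intro i k x y hx hy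
    have h : s x * s y ∈ D.alg.grading (i + k) :=
      SetLike.mul_mem_graded (hsgrad i x hx) (hsgrad k y hy)
    rw [hψapp]
    exact ((hgrad (i + k) (s x * s y)).mp h).2
  · -- graded symmetry
    intro i k x y hx hy
    have hc : s x * s y = ((-1 : F) ^ (i * k)) • (s y * s x) :=
      D.alg.gcomm i k _ _ (hsgrad i x hx) (hsgrad k y hy)
    rw [hψapp, hψapp, hc, map_smul]
    rfl
  · -- cocycle identity
    intro i x y z hx
    have h1 : (s x * s y) * s z = s ((x * y) * z) + D.t * s (ψ (x * y) z + ψ x y * z) := by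
      rw [hψ x y, add_mul, hψ (x * y) z, hT, map_add, mul_add]
      abel
    have h2 : s x * (s y * s z) =
        s (x * (y * z)) + D.t * s (ψ x (y * z) + ((-1 : F) ^ (d * i)) • (x * ψ y z)) := by
      rw [hψ y z, mul_add, hψ x (y * z), hsxt i x hx, map_add, mul_add, map_smul,
        mul_smul_comm]
      abel
    have h3 : s ((x * y) * z) + D.t * s (ψ (x * y) z + ψ x y * z) =
        s (x * (y * z)) + D.t * s (ψ x (y * z) + ((-1 : F) ^ (d * i)) • (x * ψ y z)) := by
      rw [← h1, ← h2, mul_assoc]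
    have h4 := congrArg e h3
    rw [he', he'] at h4
    have h5 : ψ (x * y) z + ψ x y * z =
        ψ x (y * z) + ((-1 : F) ^ (d * i)) • (x * ψ y z) := (Prod.ext_iff.mp h4).2
    have h6 : ((-1 : F) ^ (d * i)) • (x * ψ y z) - ψ (x * y) z + ψ x (y * z) - ψ x y * z
        = (ψ x (y * z) + ((-1 : F) ^ (d * i)) • (x * ψ y z)) - (ψ (x * y) z + ψ x y * z) := by
      abel
    rw [h6, ← h5, sub_self]
  · -- multiplication rule
    intro zz ww
    calc e (zz * ww)
        = e ((s (e zz).1 + D.t * s (e zz).2) * (s (e ww).1 + D.t * s (e ww).2)) := by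
          rw [← he zz, ← he ww]
      _ = e (s ((e zz).1 * (e ww).1) + D.t *
            s (σ (e zz).1 * (e ww).2 + (e zz).2 * (e ww).1 + ψ (e zz).1 (e ww).1)) := by
          rw [key]
      _ = _ := he' _ _
  · -- unit
    have h : (1 : D.alg.carrier) = s 1 + D.t * s 0 := by
      rw [hs1, map_zero, mul_zero, add_zero]
    rw [h, he']
  · -- the element t
    have h : D.t = s 0 + D.t * s 1 := by
      rw [hs1, map_zero, mul_one, zero_add]
    rw [h, he']
end

section
/- Let R1, R2 be graded F-algebras, R = R1 ⊗ R2 their graded tensor product, and d > 0. If a d-dimensional deformation (R̃, t, j) of R is semi-split with respect to R1 and also semi-split with respect to R2, then it is split, i.e. isomorphic as a deformation of R to the exterior product of a d-dimensional deformation of R1 and a d-dimensional deformation of R2. -/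
variable {F : Type} [Field F]

/-- `R` is (a model of) the graded tensor product `R1 ⊗ R2` via the two graded
algebra homomorphisms `f1, f2`: images of `f1` and `f2` commute up to the Koszul
sign, and the induced linear map `R1 ⊗[F] R2 → R`, `x ⊗ y ↦ f1(x)·f2(y)`, is
bijective. -/
structure IsGradedTensor (R1 R2 R : GradedFAlg F) (f1 : GradedFAlg.Hom R1 R)
    (f2 : GradedFAlg.Hom R2 R) : Prop where
  comm : ∀ (i j : ℤ) (x : R1.carrier) (y : R2.carrier),
    x ∈ R1.grading i → y ∈ R2.grading j →
    f2.toAlgHom y * f1.toAlgHom x = ((-1 : F) ^ (i * j)) • (f1.toAlgHom x * f2.toAlgHom y)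
  bij : Function.Bijective (TensorProduct.lift
    (((LinearMap.mul F R.carrier).comp f1.toAlgHom.toLinearMap).compl₂ f2.toAlgHom.toLinearMap))

/-- `D` realizes the exterior product of the deformations `D1` of `R1` and `D2`
of `R2` (where `R` is the graded tensor product of `R1` and `R2` via `f1, f2`):
there are graded algebra homomorphisms `g1 : R̃1 → D.alg` over `f1` and
`g2 : R̃2 → D.alg` over `f2` with `g1(t1) = t = g2(t2)` (i.e. `t1 ⊗ 1 = 1 ⊗ t2`),
whose images commute up to the Koszul sign and whose products span `D.alg`.
These data characterize `R̃1 ⊗_{F[ε]/ε²} R̃2` up to isomorphism of deformations. -/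
def IsExtProdOf {R1 R2 R : GradedFAlg F} (f1 : GradedFAlg.Hom R1 R)
    (f2 : GradedFAlg.Hom R2 R) {d : ℤ} (D1 : Deformation F R1 d)
    (D2 : Deformation F R2 d) (D : Deformation F R d) : Prop :=
  ∃ (g1 : GradedFAlg.Hom D1.alg D.alg) (g2 : GradedFAlg.Hom D2.alg D.alg),
    (∀ x : D1.alg.carrier, D.j.toAlgHom (g1.toAlgHom x) = f1.toAlgHom (D1.j.toAlgHom x)) ∧
    (∀ y : D2.alg.carrier, D.j.toAlgHom (g2.toAlgHom y) = f2.toAlgHom (D2.j.toAlgHom y)) ∧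
    g1.toAlgHom D1.t = D.t ∧
    g2.toAlgHom D2.t = D.t ∧
    (∀ (i j : ℤ) (x : D1.alg.carrier) (y : D2.alg.carrier),
      x ∈ D1.alg.grading i → y ∈ D2.alg.grading j →
      g2.toAlgHom y * g1.toAlgHom x =
        ((-1 : F) ^ (i * j)) • (g1.toAlgHom x * g2.toAlgHom y)) ∧
    Submodule.span F {w : D.alg.carrier |
      ∃ (x : D1.alg.carrier) (y : D2.alg.carrier), w = g1.toAlgHom x * g2.toAlgHom y} = ⊤

/-- A deformation `D` of `R` is semi-split with respect to a graded algebra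
homomorphism `f1 : R1 → R` if there is a `d`-dimensional deformation of `R1`
and a morphism from it to `D` over `f1`. -/
def SemiSplitWrt {R1 R : GradedFAlg F} (f1 : GradedFAlg.Hom R1 R) {d : ℤ}
    (D : Deformation F R d) : Prop :=
  ∃ D1 : Deformation F R1 d, Nonempty (DefMorphismOver f1 D1 D)

/-- Let `R1, R2` be graded `F`-algebras, `R = R1 ⊗ R2` their
graded tensor product, and `d > 0`. If a `d`-dimensional deformation of `R` is
semi-split with respect to `R1` and also with respect to `R2`, then it is
split: isomorphic as a deformation of `R` to the exterior product of a
deformation of `R1` and a deformation of `R2`. -/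
theorem semisplit_both_implies_split
    {F : Type} [Field F] (R1 R2 R : GradedFAlg F)
    (f1 : GradedFAlg.Hom R1 R) (f2 : GradedFAlg.Hom R2 R)
    (hT : IsGradedTensor R1 R2 R f1 f2)
    (d : ℤ) (hd : 0 < d) (D : Deformation F R d)
    (h1 : SemiSplitWrt f1 D) (h2 : SemiSplitWrt f2 D) :
    ∃ (D1 : Deformation F R1 d) (D2 : Deformation F R2 d) (D' : Deformation F R d),
      IsExtProdOf f1 f2 D1 D2 D' ∧ Deformation.Iso D' D := by

  obtain ⟨D1, ⟨φ1⟩⟩ := h1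
  obtain ⟨D2, ⟨φ2⟩⟩ := h2
  refine ⟨D1, D2, D, ⟨φ1.toHom, φ2.toHom, φ1.over_f, φ2.over_f, φ1.map_t, φ2.map_t, ?_, ?_⟩, ?_⟩
  · intro i j x y hx hy
    have hgx := φ1.toHom.graded i x hx
    have hgy := φ2.toHom.graded j y hy
    rw [D.alg.gcomm j i _ _ hgy hgx, mul_comm j i]
  · -- span condition
    set g1 := φ1.toHom.toAlgHom with hg1
    set g2 := φ2.toHom.toAlgHom with hg2
    set jD := D.j.toAlgHom with hjD
    set S : Set D.alg.carrier := {w | ∃ x y, w = g1 x * g2 y} with hS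
    set M := Submodule.span F S with hM
    -- the products f1 x * f2 y span R
    have hTop : Submodule.span F
        {r : R.carrier | ∃ x y, r = f1.toAlgHom x * f2.toAlgHom y} = ⊤ := by
      set L := TensorProduct.lift
        (((LinearMap.mul F R.carrier).comp f1.toAlgHom.toLinearMap).compl₂
          f2.toAlgHom.toLinearMap) with hL
      have hrange : LinearMap.range L = ⊤ := LinearMap.range_eq_top.mpr hT.bij.2
      rw [eq_top_iff, ← hrange]
      rintro r ⟨s, rfl⟩
      have hs : s ∈ Submodule.span F {z : TensorProduct F R1.carrier R2.carrier |
          ∃ x y, x ⊗ₜ y = z} := by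
        rw [TensorProduct.span_tmul_eq_top]; trivial
      have := Submodule.mem_map_of_mem (f := L) hs
      rw [Submodule.map_span] at this
      refine Submodule.span_le.mpr ?_ this
      rintro _ ⟨_, ⟨x, y, rfl⟩, rfl⟩
      exact Submodule.subset_span ⟨x, y, by simp [hL]⟩
    -- every element of R is the image under jD of an element of M
    have hMmapj : ∀ r : R.carrier, ∃ m ∈ M, jD m = r := by
      intro r
      have hle : Submodule.span F
          {r : R.carrier | ∃ x y, r = f1.toAlgHom x * f2.toAlgHom y} ≤
          Submodule.map jD.toLinearMap M := by
        apply Submodule.span_le.mpr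
        rintro _ ⟨x, y, rfl⟩
        obtain ⟨x', hx'⟩ := D1.j_surj x
        obtain ⟨y', hy'⟩ := D2.j_surj y
        refine ⟨g1 x' * g2 y', Submodule.subset_span ⟨x', y', rfl⟩, ?_⟩
        simp only [AlgHom.toLinearMap_apply, map_mul]
        rw [hjD, hg1, hg2, φ1.over_f, φ2.over_f, hx', hy']
      have : r ∈ Submodule.map jD.toLinearMap M := hle (hTop ▸ Submodule.mem_top)
      obtain ⟨m, hm, hjm⟩ := this
      exact ⟨m, hm, hjm⟩
    -- M is stable under multiplication by t
    have htM : ∀ m ∈ M, D.t * m ∈ M := by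
      intro m hm
      have hle : M ≤ M.comap (LinearMap.mulLeft F D.t) := by
        apply Submodule.span_le.mpr
        rintro _ ⟨x, y, rfl⟩
        show LinearMap.mulLeft F D.t (g1 x * g2 y) ∈ M
        rw [LinearMap.mulLeft_apply]
        have : D.t * (g1 x * g2 y) = g1 (D1.t * x) * g2 y := by
          rw [map_mul, hg1, φ1.map_t, mul_assoc]
        rw [this]
        exact Submodule.subset_span ⟨_, _, rfl⟩
      simpa using hle hm
    rw [eq_top_iff]
    rintro w -
    obtain ⟨m, hm, hjm⟩ := hMmapj (jD w)
    have h0 : jD (w - m) = 0 := by rw [map_sub, hjm, sub_self]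
    obtain ⟨z, hz⟩ := (D.j_ker _).mp h0
    obtain ⟨m', hm', hjm'⟩ := hMmapj (jD z)
    have h0' : jD (z - m') = 0 := by rw [map_sub, hjm', sub_self]
    obtain ⟨z', hz'⟩ := (D.j_ker _).mp h0'
    have hza : z = D.t * z' + m' := sub_eq_iff_eq_add.mp hz'
    have hwa : w = D.t * z + m := sub_eq_iff_eq_add.mp hz
    have hw : w = m + D.t * m' := by
      rw [hwa, hza, mul_add, ← mul_assoc, D.t_sq, zero_mul, zero_add, add_comm]
    rw [hw]
    exact M.add_mem hm (htM m' hm')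
  · exact ⟨⟨GradedFAlg.Hom.id D.alg, rfl, fun x => rfl⟩, Function.bijective_id⟩
end
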